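/- Let p be a prime, r > s > 0 integers, m a positive integer with p ∤ m, q = p^r, and n = m·p^s. Then the greatest common divisor of the set of integers { ⌊mi/p^{r-s}⌋ : 0 < i < q, p ∤ i, ⌊mi/p^{r-s}⌋ > 0 } equals 1. -/

import Mathlib

private lemma stmt_4_aux (p t m q : ℕ) (hp : p.Prime) (ht : 0 < t) (hm : 0 < m)
    (hpm : ¬ p ∣ m) (hq : 2 * p ^ t ≤ q) :
    Finset.gcd
      ((Finset.Ioo 0 q).filter (fun i => ¬ p ∣ i ∧ 0 < m * i / p ^ t))
      (fun i => m * i / p ^ t) = 1 := by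
  have hp2 : 2 ≤ p := hp.two_le
  have hpt1 : 1 < p ^ t := by
    calc 1 < p := hp.one_lt
    _ ≤ p ^ t := Nat.le_self_pow (by omega) p
  have hptpos : 0 < p ^ t := by omega
  have hcop : Nat.Coprime m (p ^ t) :=
    Nat.Coprime.pow_right t (hp.coprime_iff_not_dvd.mpr hpm).symm
  obtain ⟨i0, -, h1⟩ := Nat.exists_mul_mod_eq_one_of_coprime hcop hpt1
  obtain ⟨j, hjdef⟩ : ∃ j, j = i0 % p ^ t := ⟨_, rfl⟩
  have hj1 : m * j % p ^ t = 1 := by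
    rw [hjdef, Nat.mul_mod, Nat.mod_mod, ← Nat.mul_mod]; exact h1
  have hj0 : 0 < j := by
    rcases Nat.eq_zero_or_pos j with h | h
    · rw [h, Nat.mul_zero, Nat.zero_mod] at hj1; omega
    · exact h
  have hjlt : j < p ^ t := hjdef ▸ Nat.mod_lt _ hptpos
  obtain ⟨a, hdiv⟩ : ∃ a, m * j = p ^ t * a + 1 := by
    refine ⟨m * j / p ^ t, ?_⟩
    have h := Nat.div_add_mod (m * j) (p ^ t)
    omega
  have hppt : p ∣ p ^ t := dvd_pow_self p (by omega)
  have hpj : ¬ p ∣ j := by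
    intro hd
    have h2 : p ∣ p ^ t * a + 1 := hdiv ▸ (hd.mul_left m)
    have h3 : p ∣ p ^ t * a := hppt.mul_right a
    have h4 : p ∣ 1 := (Nat.dvd_add_right h3).mp h2
    exact hp.one_lt.ne' (Nat.dvd_one.mp h4)
  have hvalj : m * j / p ^ t = a := by
    rw [hdiv, Nat.mul_add_div hptpos, Nat.div_eq_of_lt hpt1, Nat.add_zero]
  have hval2 : m * (j + p ^ t) / p ^ t = a + m := by
    have heq : m * (j + p ^ t) = p ^ t * (a + m) + 1 := by
      have h5 : m * (j + p ^ t) = m * j + m * p ^ t := by ring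
      rw [h5, hdiv]; ring
    rw [heq, Nat.mul_add_div hptpos, Nat.div_eq_of_lt hpt1, Nat.add_zero]
  have hmem2 : j + p ^ t ∈ (Finset.Ioo 0 q).filter
      (fun i => ¬ p ∣ i ∧ 0 < m * i / p ^ t) := by
    rw [Finset.mem_filter, Finset.mem_Ioo]
    refine ⟨⟨by omega, by omega⟩, ?_, ?_⟩
    · intro hd
      have h' : p ∣ j := by simpa using Nat.dvd_sub hd hppt
      exact hpj h'
    · show 0 < m * (j + p ^ t) / p ^ t
      rw [hval2]; omega
  have hg2 : Finset.gcd ((Finset.Ioo 0 q).filter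
      (fun i => ¬ p ∣ i ∧ 0 < m * i / p ^ t)) (fun i => m * i / p ^ t) ∣ a + m := by
    have h6 := Finset.gcd_dvd (f := fun i => m * i / p ^ t) hmem2
    simpa [hval2] using h6
  rcases Nat.eq_zero_or_pos a with ha | ha
  · -- a = 0 : then m * j = 1, so m = 1
    have h7 : m * j = 1 := by
      rw [hdiv, ha, Nat.mul_zero, Nat.zero_add]
    have hm1 : m = 1 := Nat.eq_one_of_mul_eq_one_right h7
    have ham : a + m = 1 := by omega
    rw [ham] at hg2
    exact Nat.dvd_one.mp hg2
  · have hmemj : j ∈ (Finset.Ioo 0 q).filter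
        (fun i => ¬ p ∣ i ∧ 0 < m * i / p ^ t) := by
      rw [Finset.mem_filter, Finset.mem_Ioo]
      refine ⟨⟨hj0, by omega⟩, hpj, ?_⟩
      show 0 < m * j / p ^ t
      rw [hvalj]; omega
    have hg1 : Finset.gcd ((Finset.Ioo 0 q).filter
        (fun i => ¬ p ∣ i ∧ 0 < m * i / p ^ t)) (fun i => m * i / p ^ t) ∣ a := by
      have h8 := Finset.gcd_dvd (f := fun i => m * i / p ^ t) hmemj
      simpa [hvalj] using h8
    have hgm := (Nat.dvd_add_right hg1).mp hg2
    have hgmj : _ ∣ p ^ t * a + 1 := hdiv ▸ hgm.mul_right j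
    have h9 := (Nat.dvd_add_right (hg1.mul_left (p ^ t))).mp hgmj
    exact Nat.dvd_one.mp h9

/-- For `p` prime, `0 < s < r`, `m > 0` with `p ∤ m`, `q = p^r`, the gcd of the
set of positive values `⌊mi/p^(r-s)⌋` over integers `0 < i < q` with `p ∤ i`
equals `1`. -/
theorem stmt_4 (p r s m : ℕ) (hp : p.Prime) (hs : 0 < s) (hsr : s < r)
    (hm : 0 < m) (hpm : ¬ p ∣ m) :
    Finset.gcd
      ((Finset.Ioo 0 (p ^ r)).filter
        (fun i => ¬ p ∣ i ∧ 0 < m * i / p ^ (r - s)))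
      (fun i => m * i / p ^ (r - s)) = 1 := by
  have hq : 2 * p ^ (r - s) ≤ p ^ r := by
    have hsplit : p ^ r = p ^ (r - (r - s)) * p ^ (r - s) := by
      rw [← pow_add]; congr 1; omega
    have h2 : 2 ≤ p ^ (r - (r - s)) := by
      calc 2 ≤ p := hp.two_le
      _ ≤ p ^ (r - (r - s)) := Nat.le_self_pow (by omega) p
    rw [hsplit]
    exact Nat.mul_le_mul_right _ h2
  exact stmt_4_aux p (r - s) m (p ^ r) hp (by omega) hm hpm hq
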